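/- Under the weak robustness condition (for all w ∈ null(A): ||x_K + w_K||_1 + (1/C)||w_{K̄}||_1 ≥ ||x_K||_1) and the null-space bound ||w_K||_1 ≤ κ||w_{K̄}||_1 for all w ∈ null(A), and assuming |x_i| ≥ a₁ for all i ∈ K and |K| = k, let x̂ be an ℓ1 minimizer (Ax̂ = Ax, ||x̂||_1 ≤ ||x||_1) and K' the indices of the k largest entries of x̂ in absolute value. Then the number of indices in K' outside the support of x is at most (4C/((C-1)a₁))||x_{K̄}||_1 + (4Cκ/((C-1)a₁))||x_{K̄}||_1. -/

import Mathlib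

open Finset

theorem stmt_8 {m n : ℕ} (A : Matrix (Fin m) (Fin n) ℝ) (x : Fin n → ℝ)
    (K : Finset (Fin n)) (k : ℕ) (C κ a₁ : ℝ) (hC : 1 < C) (hκ : 0 ≤ κ)
    (ha₁ : 0 < a₁) (hK : K.card = k)
    (hns : ∀ w : Fin n → ℝ, A.mulVec w = 0 →
      ∑ i ∈ K, |x i + w i| + (1 / C) * ∑ i ∈ Kᶜ, |w i| ≥ ∑ i ∈ K, |x i|)
    (hker : ∀ w : Fin n → ℝ, A.mulVec w = 0 →
      ∑ i ∈ K, |w i| ≤ κ * ∑ i ∈ Kᶜ, |w i|)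
    (hbig : ∀ i ∈ K, a₁ ≤ |x i|)
    (xh : Fin n → ℝ) (hAx : A.mulVec xh = A.mulVec x)
    (hl1 : ∑ i, |xh i| ≤ ∑ i, |x i|)
    (K' : Finset (Fin n)) (hK' : K'.card = k)
    (htop : ∀ i ∈ K', ∀ j ∉ K', |xh j| ≤ |xh i|) :
    ((K'.filter (fun i => x i = 0)).card : ℝ) ≤
      (4 * C / ((C - 1) * a₁)) * ∑ i ∈ Kᶜ, |x i|
        + (4 * C * κ / ((C - 1) * a₁)) * ∑ i ∈ Kᶜ, |x i| := by
  classical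
  have hC0 : (0:ℝ) < C := lt_trans one_pos hC
  set w : Fin n → ℝ := fun i => xh i - x i with hw
  have hAw : A.mulVec w = 0 := by
    have : A.mulVec w = A.mulVec xh - A.mulVec x := by
      have : w = xh - x := rfl
      rw [this, Matrix.mulVec_sub]
    rw [this, hAx, sub_self]
  set X : ℝ := ∑ i ∈ Kᶜ, |x i| with hX
  set Wc : ℝ := ∑ i ∈ Kᶜ, |w i| with hWc
  have hX0 : 0 ≤ X := Finset.sum_nonneg fun i _ => abs_nonneg _
  have hWc0 : 0 ≤ Wc := Finset.sum_nonneg fun i _ => abs_nonneg _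
  have h1 : ∑ i ∈ K, |xh i| + (1 / C) * Wc ≥ ∑ i ∈ K, |x i| := by
    have := hns w hAw
    simpa [hw] using this
  -- split hl1
  have hsplit : ∀ f : Fin n → ℝ, ∑ i ∈ K, f i + ∑ i ∈ Kᶜ, f i = ∑ i, f i := fun f =>
    Finset.sum_add_sum_compl K f
  have hl1' : ∑ i ∈ K, |xh i| + ∑ i ∈ Kᶜ, |xh i| ≤ ∑ i ∈ K, |x i| + X := by
    rw [hsplit, hX, hsplit]; exact hl1
  have hxhc : ∑ i ∈ Kᶜ, |xh i| ≤ (1 / C) * Wc + X := by linarith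
  have hwineq : Wc ≤ ∑ i ∈ Kᶜ, |xh i| + X := by
    rw [hWc, hX, ← Finset.sum_add_distrib]
    exact Finset.sum_le_sum fun i _ => by
      simpa [hw] using abs_sub (xh i) (x i)
  have hWcX : (C - 1) * Wc ≤ 2 * C * X := by
    have : Wc ≤ (1 / C) * Wc + 2 * X := by linarith
    have h2 : C * Wc ≤ C * ((1 / C) * Wc + 2 * X) :=
      mul_le_mul_of_nonneg_left this (le_of_lt hC0)
    have : C * ((1 / C) * Wc) = Wc := by field_simp
    nlinarith [h2, this]
  have hWk : ∑ i ∈ K, |w i| ≤ κ * Wc := hker w hAw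
  -- the bad set
  set S : Finset (Fin n) := K'.filter (fun i => x i = 0) with hS
  have hSK' : S ⊆ K' := Finset.filter_subset _ _
  have hSnotK : ∀ i ∈ S, i ∉ K := by
    intro i hi hiK
    have hx0 : x i = 0 := (Finset.mem_filter.mp hi).2
    have := hbig i hiK
    rw [hx0, abs_zero] at this
    linarith
  have hScard : S.card ≤ (K \ K').card := by
    have h1 : S ⊆ K' \ K := fun i hi =>
      Finset.mem_sdiff.mpr ⟨hSK' hi, hSnotK i hi⟩
    have h2 : (K' \ K).card = (K \ K').card :=
      Finset.card_sdiff_comm (by rw [hK, hK'])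
    calc S.card ≤ (K' \ K).card := Finset.card_le_card h1
      _ = (K \ K').card := h2
  -- injection from S into K \ K'
  obtain ⟨f, hfmem, hfinj⟩ : ∃ f : Fin n → Fin n,
      (↑S : Set (Fin n)) ⊆ f ⁻¹' (↑(K \ K') : Set (Fin n)) ∧ Set.InjOn f ↑S := by
    by_cases hn : n = 0
    · subst hn
      exact ⟨id, by simp [Finset.eq_empty_of_isEmpty S], by simp [Finset.eq_empty_of_isEmpty S]⟩
    · have : Nonempty (Fin n) := ⟨⟨0, Nat.pos_of_ne_zero hn⟩⟩
      apply Set.Finite.exists_injOn_of_encard_le (S.finite_toSet)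
      rw [Set.encard_coe_eq_coe_finsetCard, Set.encard_coe_eq_coe_finsetCard]
      exact_mod_cast hScard
  have hkey : ∀ i ∈ S, a₁ ≤ |w i| + |w (f i)| := by
    intro i hi
    have hfi : f i ∈ K \ K' := by
      have := hfmem (Finset.mem_coe.mpr hi); simpa using this
    have hfiK : f i ∈ K := (Finset.mem_sdiff.mp hfi).1
    have hfiK' : f i ∉ K' := (Finset.mem_sdiff.mp hfi).2
    have hxa : a₁ ≤ |x (f i)| := hbig _ hfiK
    have hxle : |x (f i)| ≤ |xh (f i)| + |w (f i)| := by
      have : x (f i) = xh (f i) - w (f i) := by simp [hw]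
      rw [this]
      exact abs_sub _ _
    have hxh_le : |xh (f i)| ≤ |xh i| := htop i (hSK' hi) (f i) hfiK'
    have hxi0 : x i = 0 := (Finset.mem_filter.mp hi).2
    have hwi : |xh i| = |w i| := by simp [hw, hxi0]
    linarith
  have hsum : (S.card : ℝ) * a₁ ≤ Wc + κ * Wc := by
    have h1 : (S.card : ℝ) * a₁ = ∑ i ∈ S, a₁ := by
      rw [Finset.sum_const, nsmul_eq_mul]
    have h2 : ∑ i ∈ S, a₁ ≤ ∑ i ∈ S, (|w i| + |w (f i)|) :=
      Finset.sum_le_sum hkey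
    have h3 : ∑ i ∈ S, |w i| ≤ Wc := by
      apply Finset.sum_le_sum_of_subset_of_nonneg
      · intro i hi; exact Finset.mem_compl.mpr (hSnotK i hi)
      · intro i _ _; exact abs_nonneg _
    have h4 : ∑ i ∈ S, |w (f i)| ≤ κ * Wc := by
      have himg : ∑ i ∈ S, |w (f i)| = ∑ j ∈ S.image f, |w j| := by
        rw [Finset.sum_image (fun a ha b hb hab => hfinj ha hb hab)]
      have hsub : S.image f ⊆ K := by
        intro j hj
        obtain ⟨i, hi, rfl⟩ := Finset.mem_image.mp hj
        have := hfmem (Finset.mem_coe.mpr hi)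
        simp only [Set.mem_preimage, Finset.coe_sdiff, Set.mem_diff,
          Finset.mem_coe] at this
        exact this.1
      calc ∑ i ∈ S, |w (f i)| = ∑ j ∈ S.image f, |w j| := himg
        _ ≤ ∑ j ∈ K, |w j| := Finset.sum_le_sum_of_subset_of_nonneg hsub
            (fun i _ _ => abs_nonneg _)
        _ ≤ κ * Wc := hWk
    rw [Finset.sum_add_distrib] at h2
    linarith
  -- conclude
  rw [div_mul_eq_mul_div, div_mul_eq_mul_div, ← add_div,
    le_div_iff₀ (mul_pos (by linarith : (0:ℝ) < C - 1) ha₁)]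
  have hS1 : (S.card : ℝ) * a₁ * (C - 1) ≤ (1 + κ) * ((C - 1) * Wc) := by
    nlinarith [hsum, hWc0]
  nlinarith [hS1, hWcX, hX0, hWc0, mul_nonneg hκ hX0, mul_nonneg (mul_nonneg hκ (le_of_lt hC0)) hX0]
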